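/- Let G be a group, n₁ : G → ℤ/2 a group homomorphism (1-cocycle) and λ : G × G → ℤ/2 a 2-cocycle. Then the function O₃(g,h,k) = n₁(g)·λ(h,k) + λ(h,k)·λ(g,hk) - λ(g,h)·λ(gh,k) (mod 2) is a 3-cocycle: dO₃(g,h,k,l) := O₃(h,k,l) - O₃(gh,k,l) + O₃(g,hk,l) - O₃(g,h,kl) + O₃(g,h,k) ≡ 0 (mod 2) for all g,h,k,l ∈ G. -/
import Mathlib


/-- The obstruction 3-cochain `O₃ = n₁∪λ + λ∪₁λ`. -/
def O3 {G : Type*} [Group G] (n1 : G → ZMod 2) (lam : G → G → ZMod 2) :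
    G → G → G → ZMod 2 :=
  fun g h k => n1 g * lam h k + lam h k * lam g (h * k) - lam g h * lam (g * h) k

set_option maxHeartbeats 2000000 in
set_option maxRecDepth 8000 in
/-- If `n₁ : G → ℤ/2` is a homomorphism and `λ` a `ℤ/2`-valued 2-cocycle, then
`O₃ = n₁∪λ + λ∪₁λ` is a 3-cocycle. -/
theorem stmt_12 {G : Type*} [Group G] (n1 : G → ZMod 2) (lam : G → G → ZMod 2)
    (hn1 : ∀ g h : G, n1 (g * h) = n1 g + n1 h)
    (hcoc : ∀ g h k : G, lam h k - lam (g * h) k + lam g (h * k) - lam g h = 0) :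
    ∀ g h k l : G,
      O3 n1 lam h k l - O3 n1 lam (g * h) k l + O3 n1 lam g (h * k) l
          - O3 n1 lam g h (k * l) + O3 n1 lam g h k = 0 := by
  intro g h k l
  have H1 := hcoc h k l
  have H2 := hcoc g (h * k) l
  have H3 := hcoc g h (k * l)
  have H4 := hcoc g h k
  have H5 := hcoc (g * h) k l
  simp only [O3, hn1, mul_assoc] at *
  generalize lam k l = a at *
  generalize lam h (k * l) = b at *
  generalize lam h k = c at *
  generalize lam (h * k) l = d at *
  generalize lam (g * h) (k * l) = e at *
  generalize lam (g * h) k = f at *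
  generalize lam (g * (h * k)) l = p at *
  generalize lam g (h * (k * l)) = q at *
  generalize lam g (h * k) = r at *
  generalize lam g h = s at *
  generalize n1 g = m at *
  generalize n1 h = n at *
  have h2 : (2 : ZMod 2) = 0 := rfl
  linear_combination (m + a + e + f + q) * H1 + (a + c + e + r) * H5
    + (a + c + e + f) * H2 + (e + f) * H3
    + (-(c*d) - a*m - 2*(a*e) + f*p + d*m + d*q - b*m - b*q + e*s + c*m + c*r
       - a*a - b*e - b*f + c*f - a*q + a*p + c*p + e*p + e*f + f*r - e*q - f*q) * h2
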